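/- Let R be a commutative ring with prime ideal p generated by (a_λ)_{λ∈Λ}, with quotient domain D = R/p. Let S = ⋃_i R[a_λ^{1/d^i}] be obtained by adjoining compatible d-power roots of the generators, and p' the ideal of S generated by all a_λ^{1/d^i}. Then p' is a prime ideal of S and S/p' ≅ D. -/

import Mathlib

open MvPolynomial

/-- The relations defining `S = ⋃_i R[a_λ^{1/d^i}]`: generators `x_{λ,0} = a_λ` and
`x_{λ,i+1}^d = x_{λ,i}`. -/
noncomputable def ekaFamRelations (R : Type*) [CommRing R] {Λ : Type*} (a : Λ → R) (d : ℕ) :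
    Ideal (MvPolynomial (Λ × ℕ) R) :=
  Ideal.span
    (Set.range (fun lam : Λ => (X (lam, 0) : MvPolynomial (Λ × ℕ) R) - C (a lam)) ∪
      Set.range (fun li : Λ × ℕ =>
        (X (li.1, li.2 + 1) : MvPolynomial (Λ × ℕ) R) ^ d - X li))

/-- The ring `S = ⋃_i R[a_λ^{1/d^i}]` obtained by adjoining compatible `d^i`-th roots of a
family of elements `a_λ`, presented as a quotient of a polynomial ring. -/
def EkaFamRing (R : Type*) [CommRing R] {Λ : Type*} (a : Λ → R) (d : ℕ) : Type _ :=
  MvPolynomial (Λ × ℕ) R ⧸ ekaFamRelations R a d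

noncomputable instance (R : Type*) [CommRing R] {Λ : Type*} (a : Λ → R) (d : ℕ) :
    CommRing (EkaFamRing R a d) :=
  Ideal.Quotient.commRing _

/-- The image of the root `a_λ^{1/d^i}` in `EkaFamRing R a d`. -/
noncomputable def ekaFamRoot (R : Type*) [CommRing R] {Λ : Type*} (a : Λ → R) (d : ℕ)
    (li : Λ × ℕ) : EkaFamRing R a d :=
  Ideal.Quotient.mk (ekaFamRelations R a d) (X li)

theorem ekaKey (R : Type*) [CommRing R] {Λ : Type*} (a : Λ → R)
    (p : Ideal R) (hp : Ideal.span (Set.range a) = p)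
    (d : ℕ) (hd : 2 ≤ d) :
    ekaFamRelations R a d ⊔ Ideal.span (Set.range (X : Λ × ℕ → MvPolynomial (Λ × ℕ) R))
      = RingHom.ker (eval₂Hom (Ideal.Quotient.mk p) (fun _ => 0)) := by
  have hker : ∀ f : MvPolynomial (Λ × ℕ) R,
      f ∈ RingHom.ker (eval₂Hom (Ideal.Quotient.mk p) (fun _ : Λ × ℕ => 0)) ↔
        constantCoeff f ∈ p := by
    intro f
    rw [RingHom.mem_ker, eval₂Hom_zero'_apply]
    exact Ideal.Quotient.eq_zero_iff_mem
  apply le_antisymm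
  · rw [sup_le_iff]
    constructor
    · rw [ekaFamRelations, Ideal.span_le]
      rintro f (⟨lam, rfl⟩ | ⟨li, rfl⟩) <;> rw [SetLike.mem_coe, hker]
      · simp only [map_sub, constantCoeff_X, constantCoeff_C, zero_sub, neg_mem_iff]
        rw [← hp]; exact Ideal.subset_span ⟨lam, rfl⟩
      · simp [zero_pow (by omega : d ≠ 0)]
    · rw [Ideal.span_le]
      rintro f ⟨li, rfl⟩
      rw [SetLike.mem_coe, hker]
      simp
  · intro f hf
    rw [hker] at hf
    have h1 : C (constantCoeff f) ∈ ekaFamRelations R a d ⊔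
        Ideal.span (Set.range (X : Λ × ℕ → MvPolynomial (Λ × ℕ) R)) := by
      have : constantCoeff f ∈ Ideal.span (Set.range a) := hp ▸ hf
      refine Submodule.span_induction (p := fun x _ => (C x : MvPolynomial (Λ × ℕ) R) ∈ _)
        ?_ ?_ ?_ ?_ this
      · rintro x ⟨lam, rfl⟩
        have h2 : (X (lam, 0) : MvPolynomial (Λ × ℕ) R) - C (a lam) ∈ ekaFamRelations R a d :=
          Ideal.subset_span (Or.inl ⟨lam, rfl⟩)
        have h3 : (X (lam, 0) : MvPolynomial (Λ × ℕ) R) ∈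
            Ideal.span (Set.range (X : Λ × ℕ → MvPolynomial (Λ × ℕ) R)) :=
          Ideal.subset_span ⟨(lam, 0), rfl⟩
        have := sub_mem (Ideal.mem_sup_right h3) (Ideal.mem_sup_left h2)
        simpa using this
      · simp
      · intro x y _ _ hx hy; rw [map_add]; exact add_mem hx hy
      · intro r x _ hx
        rw [smul_eq_mul, map_mul]
        exact Ideal.mul_mem_left _ _ hx
    have h2 : f - C (constantCoeff f) ∈
        Ideal.span (Set.range (X : Λ × ℕ → MvPolynomial (Λ × ℕ) R)) := by
      rw [← Set.image_univ, mem_ideal_span_X_image]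
      intro m hm
      have hm0 : m ≠ 0 := by
        rintro rfl
        rw [mem_support_iff] at hm
        apply hm
        simp [coeff_sub, coeff_zero_C, ← constantCoeff_eq]
      obtain ⟨i, hi⟩ := Finsupp.ne_iff.mp hm0
      exact ⟨i, trivial, by simpa using hi⟩
    have := add_mem (Ideal.mem_sup_right h2) h1
    simpa using this

/-- Eka rings with prime ideals: if `p` is a prime ideal of `R` generated by `(a_λ)`, with
`D = R/p` the quotient domain, then in `S = ⋃_i R[a_λ^{1/d^i}]` the ideal
`p' = (a_λ^{1/d^i})` is prime and `S/p' ≅ D`. -/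
theorem ekaFamRing_span_roots_isPrime
    (R : Type*) [CommRing R] {Λ : Type*} (a : Λ → R)
    (p : Ideal R) [p.IsPrime] (hp : Ideal.span (Set.range a) = p)
    (d : ℕ) (hd : 2 ≤ d) :
    (Ideal.span (Set.range (ekaFamRoot R a d))).IsPrime ∧
      Nonempty
        ((EkaFamRing R a d ⧸ Ideal.span (Set.range (ekaFamRoot R a d))) ≃+* (R ⧸ p)) := by
  have hmap : Ideal.span (Set.range (ekaFamRoot R a d)) =
      Ideal.map (Ideal.Quotient.mk (ekaFamRelations R a d))
        (Ideal.span (Set.range (X : Λ × ℕ → MvPolynomial (Λ × ℕ) R))) := by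
    rw [Ideal.map_span, ← Set.range_comp]
    rfl
  have hmap' : (Ideal.span (Set.range (ekaFamRoot R a d)) :
      Ideal (MvPolynomial (Λ × ℕ) R ⧸ ekaFamRelations R a d)) =
      Ideal.map (Ideal.Quotient.mk (ekaFamRelations R a d))
        (Ideal.span (Set.range (X : Λ × ℕ → MvPolynomial (Λ × ℕ) R))) := hmap
  let e1 : (EkaFamRing R a d ⧸ Ideal.span (Set.range (ekaFamRoot R a d))) ≃+*
      MvPolynomial (Λ × ℕ) R ⧸
        (ekaFamRelations R a d ⊔ Ideal.span (Set.range (X : Λ × ℕ → MvPolynomial (Λ × ℕ) R))) :=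
    (Ideal.quotEquivOfEq hmap').trans (DoubleQuot.quotQuotEquivQuotSup _ _)
  have hker := ekaKey R a p hp d hd
  have hsurj : Function.Surjective
      (eval₂Hom (Ideal.Quotient.mk p) (fun _ : Λ × ℕ => 0)) := by
    intro y
    obtain ⟨r, rfl⟩ := Ideal.Quotient.mk_surjective y
    exact ⟨C r, by simp⟩
  let e2 : (MvPolynomial (Λ × ℕ) R ⧸
      (ekaFamRelations R a d ⊔ Ideal.span (Set.range (X : Λ × ℕ → MvPolynomial (Λ × ℕ) R))))
        ≃+* R ⧸ p :=
    (Ideal.quotEquivOfEq hker).trans (RingHom.quotientKerEquivOfSurjective hsurj)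
  let e := e1.trans e2
  have : IsDomain (EkaFamRing R a d ⧸ Ideal.span (Set.range (ekaFamRoot R a d))) :=
    e.toMulEquiv.isDomain (R ⧸ p)
  exact ⟨(Ideal.Quotient.isDomain_iff_prime _).mp this, ⟨e⟩⟩
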